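/- Let n ≥ 1 and let f : 𝔽₂ⁿ → 𝔽₂ be a Boolean function. Then f agrees on every input of even Hamming weight with the second least significant bit of the Hamming weight — that is, f(x) = ((|x|/2) mod 2) for every x ∈ 𝔽₂ⁿ with |x| even — if and only if there exists a Boolean function g : 𝔽₂ⁿ → 𝔽₂ such that for every x ∈ 𝔽₂ⁿ one has f(x) = ⨁_{1 ≤ i < j ≤ n} xᵢ·xⱼ ⊕ ((⨁_{j=1}^{n} xⱼ) · g(x)), where all sums and products are taken in 𝔽₂. -/
import Mathlib
open Finset
lemma two_mul_pairs_aux {α : Type*} [LinearOrder α] [DecidableEq α] (S : Finset α) :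
    2 * ((S ×ˢ S).filter (fun p => p.1 < p.2)).card = S.card * (S.card - 1) := by
  have hbij : ((S ×ˢ S).filter (fun p => p.1 < p.2)).card
      = ((S ×ˢ S).filter (fun p => p.2 < p.1)).card := by
    apply Finset.card_bij (fun p _ => p.swap)
    · rintro ⟨a, b⟩ hp
      simp only [mem_filter, mem_product] at hp ⊢
      exact ⟨⟨hp.1.2, hp.1.1⟩, hp.2⟩
    · rintro ⟨a, b⟩ _ ⟨c, d⟩ _ h
      simpa [Prod.ext_iff, and_comm] using h
    · rintro ⟨a, b⟩ hp
      simp only [mem_filter, mem_product] at hp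
      exact ⟨⟨b, a⟩, by simp [mem_filter, mem_product, hp.1.1, hp.1.2, hp.2]⟩
  have hunion : ((S ×ˢ S).filter (fun p => p.1 < p.2)) ∪ ((S ×ˢ S).filter (fun p => p.2 < p.1))
      = S.offDiag := by
    ext ⟨a, b⟩
    simp only [mem_union, mem_filter, mem_product, Finset.mem_offDiag]
    constructor
    · rintro (⟨⟨h1, h2⟩, h3⟩ | ⟨⟨h1, h2⟩, h3⟩)
      exacts [⟨h1, h2, h3.ne⟩, ⟨h1, h2, h3.ne'⟩]
    · rintro ⟨h1, h2, h3⟩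
      rcases h3.lt_or_gt with h | h
      · exact Or.inl ⟨⟨h1, h2⟩, h⟩
      · exact Or.inr ⟨⟨h1, h2⟩, h⟩
  have hdisj : Disjoint ((S ×ˢ S).filter (fun p => p.1 < p.2))
      ((S ×ˢ S).filter (fun p => p.2 < p.1)) := by
    rw [Finset.disjoint_left]
    rintro ⟨a, b⟩ hp hq
    simp only [mem_filter] at hp hq
    exact absurd hq.2 hp.2.asymm
  have := Finset.card_union_of_disjoint hdisj
  rw [hunion] at this
  rw [Finset.offDiag_card] at this
  have h2 : S.card * (S.card - 1) = S.card * S.card - S.card := by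
    rw [Nat.mul_sub, mul_one]
  rw [two_mul, hbij, h2]
  omega

lemma half_eq_pairs (k c : ℕ) (hk : Even k) (h : 2 * c = k * (k - 1)) :
    ((k / 2 : ℕ) : ZMod 2) = (c : ZMod 2) := by
  obtain ⟨m, rfl⟩ := hk
  rw [ZMod.natCast_eq_natCast_iff]
  have h4 : (m + m) * (m + m) = 4 * (m * m) := by ring
  have h5 : (m + m) * ((m + m) - 1) = (m + m) * (m + m) - (m + m) := by
    rw [Nat.mul_sub, mul_one]
  have hq : m ≤ m * m := by nlinarith
  rw [h5, h4] at h
  unfold Nat.ModEq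
  omega

lemma quad_eq (n : ℕ) (x : Fin n → ZMod 2) :
    (∑ i : Fin n, ∑ j : Fin n, if i < j then x i * x j else 0)
      = ((((univ.filter (fun i => x i = 1)) ×ˢ (univ.filter (fun i => x i = 1))).filter
          (fun p => p.1 < p.2)).card : ZMod 2) := by
  set S := univ.filter (fun i => x i = 1) with hS
  have hterm : ∀ i j : Fin n, (if i < j then x i * x j else 0)
      = (if i < j ∧ x i = 1 ∧ x j = 1 then (1 : ZMod 2) else 0) := by
    intro i j
    by_cases hij : i < j
    · have hi := x i; have hj := x j
      rcases (by decide : ∀ a : ZMod 2, a = 0 ∨ a = 1) (x i) with h1 | h1 <;>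
      rcases (by decide : ∀ a : ZMod 2, a = 0 ∨ a = 1) (x j) with h2 | h2 <;>
        simp [hij, h1, h2]
    · simp [hij]
  simp only [hterm]
  rw [← Finset.sum_product']
  rw [Finset.sum_boole]
  congr 2
  ext ⟨a, b⟩
  simp only [mem_filter, mem_product, hS, mem_univ, true_and]
  tauto

lemma lin_eq (n : ℕ) (x : Fin n → ZMod 2) :
    (∑ j : Fin n, x j) = (((univ.filter (fun i => x i = 1)).card : ℕ) : ZMod 2) := by
  have hterm : ∀ j : Fin n, x j = (if x j = 1 then (1 : ZMod 2) else 0) := by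
    intro j
    rcases (by decide : ∀ a : ZMod 2, a = 0 ∨ a = 1) (x j) with h | h <;> simp [h]
  calc ∑ j : Fin n, x j = ∑ j : Fin n, (if x j = 1 then (1 : ZMod 2) else 0) := by
        exact Finset.sum_congr rfl fun j _ => hterm j
    _ = _ := by rw [Finset.sum_boole]

/-- A Boolean function `f : 𝔽₂ⁿ → 𝔽₂` agrees on every even-Hamming-weight input with the
second least significant bit of the Hamming weight iff it has the form
`⨁_{i<j} xᵢxⱼ ⊕ (⨁_j xⱼ)·g(x)` for some Boolean function `g`. -/
theorem stmt_0 (n : ℕ) (hn : 1 ≤ n) (f : (Fin n → ZMod 2) → ZMod 2) :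
    (∀ x : Fin n → ZMod 2,
        Even ((univ.filter (fun i => x i = 1)).card) →
        f x = (((univ.filter (fun i => x i = 1)).card / 2 : ℕ) : ZMod 2))
      ↔ ∃ g : (Fin n → ZMod 2) → ZMod 2, ∀ x : Fin n → ZMod 2,
          f x = (∑ i : Fin n, ∑ j : Fin n, if i < j then x i * x j else 0)
                + (∑ j : Fin n, x j) * g x := by
  constructor
  · intro hf
    refine ⟨fun x => f x - (∑ i : Fin n, ∑ j : Fin n, if i < j then x i * x j else 0), ?_⟩
    intro x
    set S := univ.filter (fun i => x i = 1) with hS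
    by_cases hk : Even S.card
    · have hL : (∑ j : Fin n, x j) = 0 := by
        rw [lin_eq]
        have : (S.card : ZMod 2) = ((0 : ℕ) : ZMod 2) := by
          rw [ZMod.natCast_eq_natCast_iff]
          exact (Nat.modEq_zero_iff_dvd).mpr hk.two_dvd
        simpa using this
      rw [hL, zero_mul, add_zero, quad_eq, hf x hk,
        half_eq_pairs _ _ hk (two_mul_pairs_aux S)]
    · have hL : (∑ j : Fin n, x j) = 1 := by
        rw [lin_eq]
        have : (S.card : ZMod 2) = ((1 : ℕ) : ZMod 2) := by
          rw [ZMod.natCast_eq_natCast_iff]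
          have := Nat.odd_iff.mp (Nat.not_even_iff_odd.mp hk)
          unfold Nat.ModEq
          omega
        simpa using this
      rw [hL, one_mul]
      ring
  · rintro ⟨g, hg⟩ x hk
    have hL : (∑ j : Fin n, x j) = 0 := by
      rw [lin_eq]
      have : ((univ.filter (fun i => x i = 1)).card : ZMod 2) = ((0 : ℕ) : ZMod 2) := by
        rw [ZMod.natCast_eq_natCast_iff]
        exact (Nat.modEq_zero_iff_dvd).mpr hk.two_dvd
      simpa using this
    rw [hg x, hL, zero_mul, add_zero, quad_eq,
      half_eq_pairs _ _ hk (two_mul_pairs_aux _)]
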